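/- Let Φ be a completely positive trace-preserving map on trace-class operators, and suppose that for every pure state |ψ⟩ (unit vector) there is a quantum state σ_ψ such that Φ(|ψ⟩⟨ψ|) = |ψ⟩⟨ψ| ⊗ σ_ψ. Then σ_ψ is independent of ψ: for any two unit vectors ψ, ψ′ with ⟨ψ|ψ′⟩ ≠ 0, σ_ψ = σ_{ψ′}. -/

import Mathlib

open Matrix Kronecker
open scoped ComplexOrder

/-- The trace norm `‖A‖₁ = tr √(AᴴA)` of a matrix. -/
noncomputable def traceNorm {I : Type*} [Fintype I] [DecidableEq I]
    (A : Matrix I I ℂ) : ℝ :=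
  (((Matrix.posSemidef_conjTranspose_mul_self A).1.eigenvectorUnitary.1 *
    diagonal (((↑) : ℝ → ℂ) ∘ (Real.sqrt ∘ (Matrix.posSemidef_conjTranspose_mul_self A).1.eigenvalues)) *
    (star (Matrix.posSemidef_conjTranspose_mul_self A).1.eigenvectorUnitary : Matrix I I ℂ)).trace).re

/-- If a trace-norm-contractive linear (CPTP) map `Φ` sends every pure state `|ψ⟩⟨ψ|` to
`|ψ⟩⟨ψ| ⊗ σ_ψ` for some state `σ_ψ`, then `σ_ψ` is independent of `ψ`: it coincides for any
two non-orthogonal unit vectors. -/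
theorem stmt7 {n m : ℕ}
    (Φ : Matrix (Fin n) (Fin n) ℂ →ₗ[ℂ] Matrix (Fin n × Fin m) (Fin n × Fin m) ℂ)
    (hcontr : ∀ A, traceNorm (Φ A) ≤ traceNorm A)
    (σ : (Fin n → ℂ) → Matrix (Fin m) (Fin m) ℂ)
    (hσ : ∀ ψ : Fin n → ℂ, (∑ i, ‖ψ i‖ ^ 2) = 1 →
      (σ ψ).PosSemidef ∧ (σ ψ).trace = 1 ∧
        Φ (Matrix.vecMulVec ψ (star ψ)) = (Matrix.vecMulVec ψ (star ψ)) ⊗ₖ σ ψ) :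
    ∀ ψ ψ' : Fin n → ℂ, (∑ i, ‖ψ i‖ ^ 2) = 1 → (∑ i, ‖ψ' i‖ ^ 2) = 1 →
      (∑ i, star (ψ i) * ψ' i) ≠ 0 → σ ψ = σ ψ' := by
  intro ψ ψ' hψ hψ' _
  -- ψ, ψ' are nonzero
  have hψne : ψ ≠ 0 := by
    intro h
    rw [h] at hψ
    simp at hψ
  have hψ'ne : ψ' ≠ 0 := by
    intro h
    rw [h] at hψ'
    simp at hψ'
  -- key lemma: for any nonzero v, Φ(|v⟩⟨v|) = |v⟩⟨v| ⊗ τ for some τ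
  have key : ∀ v : Fin n → ℂ, v ≠ 0 →
      ∃ τ, Φ (Matrix.vecMulVec v (star v)) = (Matrix.vecMulVec v (star v)) ⊗ₖ τ := by
    intro v hv
    set s : ℝ := ∑ i, ‖v i‖ ^ 2 with hs
    have hspos : 0 < s := by
      obtain ⟨i, hi⟩ := Function.ne_iff.mp hv
      have hi' : v i ≠ 0 := by simpa using hi
      refine Finset.sum_pos' (fun j _ => by positivity)
        ⟨i, Finset.mem_univ i, pow_pos (norm_pos_iff.mpr hi') 2⟩
    have hsrt : Real.sqrt s * Real.sqrt s = s := Real.mul_self_sqrt hspos.le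
    have hsrtne : (Real.sqrt s : ℂ) ≠ 0 :=
      Complex.ofReal_ne_zero.mpr (Real.sqrt_ne_zero'.mpr hspos)
    set u : Fin n → ℂ := fun i => ((Real.sqrt s : ℂ))⁻¹ * v i with hu_def
    have hu : (∑ i, ‖u i‖ ^ 2) = 1 := by
      have h1 : ∀ i, ‖u i‖ ^ 2 = (Real.sqrt s)⁻¹ ^ 2 * ‖v i‖ ^ 2 := by
        intro i
        simp [hu_def, norm_mul, mul_pow, Real.sqrt_nonneg, abs_of_nonneg]
      rw [Finset.sum_congr rfl (fun i _ => h1 i), ← Finset.mul_sum, ← hs]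
      field_simp
      rw [Real.sq_sqrt hspos.le]
    obtain ⟨_, _, hΦu⟩ := hσ u hu
    have hscale : Matrix.vecMulVec v (star v) =
        (s : ℂ) • Matrix.vecMulVec u (star u) := by
      ext i j
      simp only [Matrix.vecMulVec_apply, Matrix.smul_apply, Pi.star_apply, hu_def,
        smul_eq_mul, star_mul', star_inv₀, Complex.star_def, Complex.conj_ofReal]
      have hc : (s : ℂ) = (Real.sqrt s : ℂ) * (Real.sqrt s : ℂ) := by
        rw [← Complex.ofReal_mul, hsrt]
      rw [hc]
      field_simp
    refine ⟨σ u, ?_⟩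
    rw [hscale, _root_.map_smul, hΦu, ← Matrix.smul_kronecker]
  -- data for ψ and ψ'
  obtain ⟨_, _, hA⟩ := hσ ψ hψ
  obtain ⟨_, _, hB⟩ := hσ ψ' hψ'
  by_cases hdep : ∃ c : ℂ, ψ' = c • ψ
  · -- linearly dependent case: ψ' = c • ψ with |c| = 1
    obtain ⟨c, hc⟩ := hdep
    have hc1 : c * (starRingEnd ℂ) c = 1 := by
      have h1 : (∑ i, ‖(c • ψ) i‖ ^ 2) = 1 := hc ▸ hψ'
      have h2 : (∑ i, ‖(c • ψ) i‖ ^ 2) = ‖c‖ ^ 2 * ∑ i, ‖ψ i‖ ^ 2 := by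
        rw [Finset.mul_sum]
        refine Finset.sum_congr rfl fun i _ => ?_
        simp [norm_mul, mul_pow]
      have h3 : ‖c‖ ^ 2 = 1 := by rw [h2, hψ, mul_one] at h1; exact h1
      have h4 : Complex.normSq c = 1 := by
        rw [Complex.normSq_eq_norm_sq, h3]
      rw [Complex.mul_conj, h4]
      norm_num
    -- |ψ'⟩⟨ψ'| = |ψ⟩⟨ψ|
    have hPP : Matrix.vecMulVec ψ' (star ψ') = Matrix.vecMulVec ψ (star ψ) := by
      ext i j
      simp only [Matrix.vecMulVec_apply, Pi.star_apply, hc, Pi.smul_apply, smul_eq_mul,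
        star_mul', Complex.star_def]
      linear_combination (ψ i * (starRingEnd ℂ) (ψ j)) * hc1
    have hEq : (Matrix.vecMulVec ψ (star ψ)) ⊗ₖ σ ψ =
        (Matrix.vecMulVec ψ (star ψ)) ⊗ₖ σ ψ' := by
      rw [← hA, ← hPP, hB]
    obtain ⟨i0, hi0⟩ := Function.ne_iff.mp hψne
    ext k l
    have h5 := congrFun (congrFun hEq (i0, k)) (i0, l)
    simp only [Matrix.kroneckerMap_apply, Matrix.vecMulVec_apply, Pi.star_apply] at h5
    have hne : ψ i0 * star (ψ i0) ≠ 0 :=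
      mul_ne_zero hi0 (star_ne_zero.mpr hi0)
    exact mul_left_cancel₀ hne h5
  · -- linearly independent case
    have L : ∀ a b : ℂ, a • ψ + b • ψ' = 0 → a = 0 ∧ b = 0 := by
      intro a b hab
      have hb : b = 0 := by
        by_contra hbne
        apply hdep
        refine ⟨-a / b, ?_⟩
        funext i
        have := congrFun hab i
        simp only [Pi.add_apply, Pi.smul_apply, Pi.zero_apply, smul_eq_mul] at this ⊢
        rw [div_mul_eq_mul_div, eq_div_iff hbne]
        linear_combination this
      subst hb
      simp only [zero_smul, add_zero] at hab
      have ha : a = 0 := by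
        by_contra hane
        exact hψne (by
          funext i
          have := congrFun hab i
          simp only [Pi.smul_apply, Pi.zero_apply, smul_eq_mul] at this
          exact (mul_eq_zero.mp this).resolve_left hane)
      exact ⟨ha, rfl⟩
    -- ψ + ψ' and ψ - ψ' are nonzero
    have hvne : (ψ + ψ') ≠ 0 := by
      intro h
      have : (1 : ℂ) • ψ + (1 : ℂ) • ψ' = 0 := by simpa using h
      exact one_ne_zero (L 1 1 this).1
    have hwne : (ψ - ψ') ≠ 0 := by
      intro h
      have : (1 : ℂ) • ψ + (-1 : ℂ) • ψ' = 0 := by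
        funext i
        have := congrFun h i
        simp only [Pi.sub_apply, Pi.zero_apply] at this
        simp only [Pi.add_apply, Pi.smul_apply, Pi.zero_apply, smul_eq_mul]
        linear_combination this
      exact one_ne_zero (L 1 (-1) this).1
    obtain ⟨τ1, h1⟩ := key (ψ + ψ') hvne
    obtain ⟨τ4, h4⟩ := key (ψ - ψ') hwne
    -- |ψ⟩⟨ψ| + |ψ'⟩⟨ψ'| = ½(|ψ+ψ'⟩⟨ψ+ψ'| + |ψ-ψ'⟩⟨ψ-ψ'|)
    have hsum : Matrix.vecMulVec ψ (star ψ) + Matrix.vecMulVec ψ' (star ψ') =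
        (2⁻¹ : ℂ) • (Matrix.vecMulVec (ψ + ψ') (star (ψ + ψ')) +
          Matrix.vecMulVec (ψ - ψ') (star (ψ - ψ'))) := by
      ext i j
      simp only [Matrix.add_apply, Matrix.smul_apply, Matrix.vecMulVec_apply, Pi.star_apply,
        Pi.add_apply, Pi.sub_apply, star_add, star_sub, smul_eq_mul, Complex.star_def,
        map_add, map_sub]
      ring
    have hEq : (Matrix.vecMulVec ψ (star ψ)) ⊗ₖ σ ψ +
        (Matrix.vecMulVec ψ' (star ψ')) ⊗ₖ σ ψ' =
        (2⁻¹ : ℂ) • ((Matrix.vecMulVec (ψ + ψ') (star (ψ + ψ'))) ⊗ₖ τ1 +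
          (Matrix.vecMulVec (ψ - ψ') (star (ψ - ψ'))) ⊗ₖ τ4) := by
      rw [← hA, ← hB, ← h1, ← h4, ← _root_.map_add, ← _root_.map_add, ← _root_.map_smul, hsum]
    ext k l
    -- entrywise consequence
    have hE : ∀ i j : Fin n,
        ψ i * star (ψ j) * σ ψ k l + ψ' i * star (ψ' j) * σ ψ' k l =
        2⁻¹ * ((ψ i + ψ' i) * (star (ψ j) + star (ψ' j)) * τ1 k l +
          (ψ i - ψ' i) * (star (ψ j) - star (ψ' j)) * τ4 k l) := by
      intro i j
      have := congrFun (congrFun hEq (i, k)) (j, l)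
      simpa only [Matrix.add_apply, Matrix.smul_apply, Matrix.kroneckerMap_apply,
        Matrix.vecMulVec_apply, Pi.star_apply, Pi.add_apply, Pi.sub_apply, star_add, star_sub,
        smul_eq_mul] using this
    set α : ℂ := σ ψ k l - 2⁻¹ * (τ1 k l + τ4 k l) with hα
    set β : ℂ := σ ψ' k l - 2⁻¹ * (τ1 k l + τ4 k l) with hβ
    set γ : ℂ := 2⁻¹ * (τ1 k l - τ4 k l) with hγ
    have hcoef : ∀ j : Fin n,
        (α * star (ψ j) - γ * star (ψ' j)) = 0 ∧ (β * star (ψ' j) - γ * star (ψ j)) = 0 := by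
      intro j
      refine L _ _ ?_
      funext i
      simp only [Pi.add_apply, Pi.smul_apply, Pi.zero_apply, smul_eq_mul, hα, hβ, hγ]
      linear_combination hE i j
    have hαγ : α = 0 ∧ γ = 0 := by
      have h5 : (starRingEnd ℂ) α • ψ + (-(starRingEnd ℂ) γ) • ψ' = 0 := by
        funext j
        have := (hcoef j).1
        have h6 := congrArg (starRingEnd ℂ) this
        simp only [map_sub, _root_.map_mul, Complex.star_def, Complex.conj_conj, map_zero] at h6
        simp only [Pi.add_apply, Pi.smul_apply, Pi.zero_apply, smul_eq_mul]
        linear_combination h6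
      obtain ⟨ha', hg'⟩ := L _ _ h5
      constructor
      · simpa using congrArg (starRingEnd ℂ) ha'
      · have h7 : (starRingEnd ℂ) γ = 0 := by simpa using hg'
        simpa using congrArg (starRingEnd ℂ) h7
    have hβ0 : β = 0 := by
      have h8 : ∀ j, β * star (ψ' j) = 0 := by
        intro j
        have := (hcoef j).2
        rw [hαγ.2] at this
        simpa using this
      by_contra hβne
      apply hψ'ne
      funext j
      have := h8 j
      have h9 : star (ψ' j) = 0 := (mul_eq_zero.mp this).resolve_left hβne
      simpa using congrArg star h9
    have e1 : σ ψ k l - 2⁻¹ * (τ1 k l + τ4 k l) = 0 := hα.symm.trans hαγ.1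
    have e2 : σ ψ' k l - 2⁻¹ * (τ1 k l + τ4 k l) = 0 := hβ.symm.trans hβ0
    linear_combination e1 - e2
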